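/- Let N ≥ 1 be an integer and f : I → ℝ of class C^N with ‖f^{(j)}‖_I ≤ M_j for all 0 ≤ j ≤ N. Let x_{−1} ∈ I with f(x_{−1}) ≠ 0, let 1 ≤ m ≤ N, and let x_0 ∈ I be an m-fold zero of f, i.e. f^{(i)}(x_0) = 0 for all 0 ≤ i ≤ m−1. Then |x_{−1} − x_0| ≥ (1/e)·Σ_{j=j_0+1}^{m} 1/μ_j, where j_0 := min{j ∈ ℕ : j ≥ log(M_0/|f(x_{−1})|)} (a sum over an empty index range being 0). -/

import Mathlib

open Set Finset Nat

private lemma itdw_eq {g : ℝ → ℝ} {U s : Set ℝ} (hU : IsOpen U) (hsU : s ⊆ U)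
    (hs : UniqueDiffOn ℝ s) {n : ℕ} (hg : ContDiffOn ℝ (n : ℕ∞) g U) {t : ℝ} (ht : t ∈ s) :
    iteratedDerivWithin n g s t = iteratedDeriv n g t := by
  have h1 : HasFTaylorSeriesUpToOn (n : ℕ∞) g (ftaylorSeriesWithin ℝ g U) U :=
    hg.ftaylorSeriesWithin hU.uniqueDiffOn
  have h2 : ftaylorSeriesWithin ℝ g U t n = iteratedFDerivWithin ℝ n g s t :=
    (h1.mono hsU).eq_iteratedFDerivWithin_of_uniqueDiffOn (by exact_mod_cast le_rfl) hs ht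
  have h3 : iteratedFDerivWithin ℝ n g U t = iteratedFDeriv ℝ n g t :=
    iteratedFDerivWithin_of_isOpen n hU (hsU ht)
  rw [iteratedDerivWithin_eq_iteratedFDerivWithin, iteratedDeriv_eq_iteratedFDeriv, ← h2]
  have h4 : ftaylorSeriesWithin ℝ g U t n = iteratedFDerivWithin ℝ n g U t := rfl
  rw [h4, h3]

private lemma contDiffOn_itd_open {U : Set ℝ} (hU : IsOpen U) :
    ∀ (j n : ℕ) (f : ℝ → ℝ), ContDiffOn ℝ ((j + n : ℕ) : ℕ∞) f U →
      ContDiffOn ℝ (n : ℕ∞) (iteratedDeriv j f) U := by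
  intro j
  induction j with
  | zero => intro n f h; simpa [iteratedDeriv_zero] using h
  | succ k ih =>
    intro n f h
    rw [iteratedDeriv_succ']
    apply ih
    have h' := h.deriv_of_isOpen hU (m := ((k + n : ℕ) : ℕ∞)) (by exact_mod_cast by omega)
    exact h'

private lemma itd_comp (n j : ℕ) (f : ℝ → ℝ) :
    iteratedDeriv n (iteratedDeriv j f) = iteratedDeriv (n + j) f := by
  rw [iteratedDeriv_eq_iterate, iteratedDeriv_eq_iterate, iteratedDeriv_eq_iterate,
    Function.iterate_add_apply]

private lemma taylor_le {g : ℝ → ℝ} {U : Set ℝ} (hU : IsOpen U) {n : ℕ}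
    (hg : ContDiffOn ℝ ((n + 1 : ℕ) : ℕ∞) g U) {a b : ℝ} (hab : a ≤ b)
    (hsub : Set.Icc a b ⊆ U) {C : ℝ}
    (hC : ∀ t ∈ Set.Icc a b, |iteratedDeriv (n + 1) g t| ≤ C) :
    |g b - ∑ i ∈ Finset.range (n + 1), iteratedDeriv i g a * (b - a) ^ i / i !| ≤
      C * |b - a| ^ (n + 1) / (n + 1)! := by
  rcases eq_or_lt_of_le hab with rfl | hab'
  · simp [Finset.sum_range_succ', sub_self]
  · have huD := uniqueDiffOn_Icc hab'
    have hg' : ContDiffOn ℝ ((n + 1 : ℕ) : ℕ∞) g (Set.Icc a b) := hg.mono hsub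
    have hcd : ContDiffOn ℝ (n : ℕ∞) g (Set.Icc a b) :=
      hg'.of_le (by exact_mod_cast Nat.le_succ n)
    have hdiff : DifferentiableOn ℝ (iteratedDerivWithin n g (Set.Icc a b)) (Set.Ioo a b) :=
      (hg'.differentiableOn_iteratedDerivWithin (by exact_mod_cast Nat.lt_succ_self n)
        huD).mono Set.Ioo_subset_Icc_self
    obtain ⟨x', hx', heq⟩ := taylor_mean_remainder_lagrange (f := g) hab'.ne
      (by rw [Set.uIcc_of_le hab]; exact_mod_cast hcd)
      (by rw [Set.uIcc_of_le hab, Set.uIoo_of_le hab]; exact hdiff)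
    rw [Set.uIcc_of_le hab] at heq
    rw [Set.uIoo_of_le hab] at hx'
    rw [taylor_within_apply] at heq
    have hconv : ∀ i : ℕ, i ≤ n + 1 → ∀ t ∈ Set.Icc a b,
        iteratedDerivWithin i g (Set.Icc a b) t = iteratedDeriv i g t := by
      intro i hi t ht
      exact itdw_eq hU hsub huD (hg.of_le (by exact_mod_cast hi)) ht
    have hsum : ∑ i ∈ Finset.range (n + 1),
        ((i ! : ℝ)⁻¹ * (b - a) ^ i) • iteratedDerivWithin i g (Set.Icc a b) a
        = ∑ i ∈ Finset.range (n + 1), iteratedDeriv i g a * (b - a) ^ i / i ! := by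
      refine Finset.sum_congr rfl fun i hi => ?_
      rw [Finset.mem_range] at hi
      rw [hconv i (by omega) a (Set.left_mem_Icc.mpr hab), smul_eq_mul]
      ring
    rw [hsum] at heq
    rw [heq, hconv (n + 1) le_rfl x' (Set.Ioo_subset_Icc_self hx')]
    rw [abs_div, abs_mul, abs_pow]
    have h1 : |((n + 1)! : ℝ)| = ((n + 1)! : ℝ) := abs_of_pos (by positivity)
    rw [h1]
    gcongr
    exact hC x' (Set.Ioo_subset_Icc_self hx')

private lemma taylor_abs {g : ℝ → ℝ} {U : Set ℝ} (hU : IsOpen U) {n : ℕ}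
    (hg : ContDiffOn ℝ ((n + 1 : ℕ) : ℕ∞) g U) {a b : ℝ} (hsub : Set.uIcc a b ⊆ U) {C : ℝ}
    (hC : ∀ t ∈ Set.uIcc a b, |iteratedDeriv (n + 1) g t| ≤ C) :
    |g b - ∑ i ∈ Finset.range (n + 1), iteratedDeriv i g a * (b - a) ^ i / i !| ≤
      C * |b - a| ^ (n + 1) / (n + 1)! := by
  rcases le_total a b with hab | hba
  · rw [Set.uIcc_of_le hab] at hsub hC
    exact taylor_le hU hg hab hsub hC
  · have hU' : IsOpen ((fun u : ℝ => -u) ⁻¹' U) := hU.preimage continuous_neg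
    have hmem : ∀ t ∈ Set.Icc (-a) (-b), -t ∈ Set.uIcc a b := by
      intro t ht
      rw [Set.uIcc_of_ge hba]
      exact ⟨by linarith [ht.2], by linarith [ht.1]⟩
    have hgc : ContDiffOn ℝ ((n + 1 : ℕ) : ℕ∞) (fun u : ℝ => g (-u))
        ((fun u : ℝ => -u) ⁻¹' U) :=
      hg.comp (contDiff_neg.contDiffOn) (fun u hu => hu)
    have hsub' : Set.Icc (-a) (-b) ⊆ (fun u : ℝ => -u) ⁻¹' U :=
      fun t ht => hsub (hmem t ht)
    have hC' : ∀ t ∈ Set.Icc (-a) (-b), |iteratedDeriv (n + 1) (fun u : ℝ => g (-u)) t| ≤ C := by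
      intro t ht
      rw [iteratedDeriv_comp_neg, smul_eq_mul, abs_mul, abs_pow, abs_neg, abs_one, one_pow,
        one_mul]
      exact hC (-t) (hmem t ht)
    have H := taylor_le hU' hgc (neg_le_neg hba) hsub' hC'
    simp only [neg_neg, iteratedDeriv_comp_neg, smul_eq_mul] at H
    have e2 : (-b : ℝ) - -a = a - b := by ring
    rw [e2, abs_sub_comm a b] at H
    have hsum : ∑ i ∈ Finset.range (n + 1),
        (-1 : ℝ) ^ i * iteratedDeriv i g a * (a - b) ^ i / i !
        = ∑ i ∈ Finset.range (n + 1), iteratedDeriv i g a * (b - a) ^ i / i ! := by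
      refine Finset.sum_congr rfl fun i _ => ?_
      have : (-1 : ℝ) ^ i * (a - b) ^ i = (b - a) ^ i := by
        rw [← mul_pow]; ring_nf
      calc (-1 : ℝ) ^ i * iteratedDeriv i g a * (a - b) ^ i / i !
          = iteratedDeriv i g a * ((-1 : ℝ) ^ i * (a - b) ^ i) / i ! := by ring
        _ = iteratedDeriv i g a * (b - a) ^ i / i ! := by rw [this]
    rw [hsum] at H
    exact H

private lemma M_pos {μ M : ℕ → ℝ} (hμpos : ∀ j, 1 ≤ j → 0 < μ j) (hM0 : 0 < M 0)
    (hMrec : ∀ j, M (j + 1) = M j * μ (j + 1)) : ∀ j, 0 < M j := by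
  intro j
  induction j with
  | zero => exact hM0
  | succ k ih => rw [hMrec k]; exact mul_pos ih (hμpos (k + 1) (by omega))

private lemma mu_mono {μ : ℕ → ℝ} (hμmono : ∀ j, 1 ≤ j → μ j ≤ μ (j + 1)) :
    ∀ j k, 1 ≤ j → j ≤ k → μ j ≤ μ k := by
  intro j k hj hjk
  induction k with
  | zero => omega
  | succ l ih =>
    rcases Nat.lt_or_ge j (l + 1) with h | h
    · exact le_trans (ih (by omega)) (hμmono l (by omega))
    · have : j = l + 1 := by omega
      subst this; rfl

private lemma M_le {μ M : ℕ → ℝ} (hμpos : ∀ j, 1 ≤ j → 0 < μ j)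
    (hμmono : ∀ j, 1 ≤ j → μ j ≤ μ (j + 1)) (hM0 : 0 < M 0)
    (hMrec : ∀ j, M (j + 1) = M j * μ (j + 1)) (j k : ℕ) :
    ∀ i, j + i ≤ k → M (j + i) ≤ M j * μ k ^ i := by
  intro i
  induction i with
  | zero => intro _; simp
  | succ l ih =>
    intro hle
    have h1 : M (j + (l + 1)) = M (j + l) * μ (j + l + 1) := hMrec (j + l)
    rw [h1, pow_succ, ← mul_assoc]
    have h2 : μ (j + l + 1) ≤ μ k := mu_mono hμmono (j + l + 1) k (by omega) (by omega)
    have h3 : 0 < μ (j + l + 1) := hμpos _ (by omega)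
    have h4 : 0 < M (j + l) := M_pos hμpos hM0 hMrec _
    have h5 := ih (by omega)
    nlinarith [M_pos hμpos hM0 hMrec j, pow_pos (hμpos k (by omega)) l,
      pow_nonneg (le_of_lt (hμpos k (by omega))) l]

private lemma step_lemma (μ M : ℕ → ℝ) (hμpos : ∀ j, 1 ≤ j → 0 < μ j)
    (hμmono : ∀ j, 1 ≤ j → μ j ≤ μ (j + 1)) (hM0 : 0 < M 0)
    (hMrec : ∀ j, M (j + 1) = M j * μ (j + 1))
    (x y : ℝ) (hxy : x ≤ y) (N : ℕ) (f : ℝ → ℝ) (U : Set ℝ) (hU : IsOpen U)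
    (hUsub : Set.Icc x y ⊆ U) (hfC : ContDiffOn ℝ (N : ℕ∞) f U)
    (hbd : ∀ j ≤ N, ∀ t ∈ Set.Icc x y, |iteratedDeriv j f t| ≤ M j)
    (k : ℕ) (hk1 : 1 ≤ k) (hkN : k ≤ N) (a b : ℝ) (ha : a ∈ Set.Icc x y) (hb : b ∈ Set.Icc x y)
    (hyp : ∀ j ≤ k, |iteratedDeriv j f a| ≤ M j * Real.exp ((j : ℝ) - k)) :
    ∀ j ≤ k, |iteratedDeriv j f b| ≤
      M j * Real.exp ((j : ℝ) - k) * Real.exp (Real.exp 1 * μ k * |b - a|) := by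
  have hμk : 0 < μ k := hμpos k hk1
  intro j hj
  have hMj : 0 < M j := M_pos hμpos hM0 hMrec j
  have ht0 : 0 ≤ Real.exp 1 * μ k * |b - a| := by positivity
  rcases eq_or_lt_of_le hj with rfl | hjk
  · have h1 : |iteratedDeriv j f b| ≤ M j := hbd j hkN b hb
    have h2 := Real.one_le_exp ht0
    simp only [sub_self, Real.exp_zero, mul_one]
    nlinarith
  · -- j < k
    set n : ℕ := k - j - 1 with hn
    have hnk : n + 1 + j = k := by omega
    have huIcc : Set.uIcc a b ⊆ Set.Icc x y := by
      rw [← Set.uIcc_of_le hxy]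
      exact Set.uIcc_subset_uIcc (by rwa [Set.uIcc_of_le hxy]) (by rwa [Set.uIcc_of_le hxy])
    have hsub' : Set.uIcc a b ⊆ U := huIcc.trans hUsub
    have hgC : ContDiffOn ℝ ((n + 1 : ℕ) : ℕ∞) (iteratedDeriv j f) U := by
      apply contDiffOn_itd_open hU j (n + 1) f
      apply hfC.of_le
      exact_mod_cast (by omega : j + (n + 1) ≤ N)
    have hCb : ∀ t ∈ Set.uIcc a b, |iteratedDeriv (n + 1) (iteratedDeriv j f) t| ≤ M k := by
      intro t htt
      rw [itd_comp, hnk]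
      exact hbd k hkN t (huIcc htt)
    have H := taylor_abs hU hgC hsub' hCb
    -- key per-term bound
    have key : ∀ i : ℕ, i + j ≤ k →
        M (i + j) * Real.exp (((i + j : ℕ) : ℝ) - k) * |b - a| ^ i ≤
        M j * Real.exp ((j : ℝ) - k) * (Real.exp 1 * μ k * |b - a|) ^ i := by
      intro i hik
      have h1 : M (j + i) ≤ M j * μ k ^ i :=
        M_le hμpos hμmono hM0 hMrec j k i (by omega)
      have h1' : M (i + j) ≤ M j * μ k ^ i := by rwa [Nat.add_comm i j]
      have h2 : Real.exp (((i + j : ℕ) : ℝ) - k) =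
          Real.exp ((j : ℝ) - k) * Real.exp 1 ^ i := by
        rw [Real.exp_one_pow, ← Real.exp_add]
        congr 1
        push_cast
        ring
      rw [h2]
      have h3 : (0 : ℝ) ≤ Real.exp ((j : ℝ) - k) * Real.exp 1 ^ i * |b - a| ^ i := by positivity
      calc M (i + j) * (Real.exp ((j : ℝ) - k) * Real.exp 1 ^ i) * |b - a| ^ i
          = M (i + j) * (Real.exp ((j : ℝ) - k) * Real.exp 1 ^ i * |b - a| ^ i) := by ring
        _ ≤ (M j * μ k ^ i) * (Real.exp ((j : ℝ) - k) * Real.exp 1 ^ i * |b - a| ^ i) :=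
            mul_le_mul_of_nonneg_right h1' h3
        _ = M j * Real.exp ((j : ℝ) - k) * (Real.exp 1 * μ k * |b - a|) ^ i := by ring
    -- bound the Taylor sum
    have hS : |∑ i ∈ Finset.range (n + 1),
        iteratedDeriv i (iteratedDeriv j f) a * (b - a) ^ i / i !| ≤
        ∑ i ∈ Finset.range (n + 1),
          M j * Real.exp ((j : ℝ) - k) * (Real.exp 1 * μ k * |b - a|) ^ i / i ! := by
      refine (Finset.abs_sum_le_sum_abs _ _).trans (Finset.sum_le_sum fun i hi => ?_)
      rw [Finset.mem_range] at hi
      rw [abs_div, abs_mul, abs_pow, Nat.abs_cast, itd_comp]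
      have hija : |iteratedDeriv (i + j) f a| ≤ M (i + j) * Real.exp (((i + j : ℕ) : ℝ) - k) :=
        hyp (i + j) (by omega)
      have hki := key i (by omega)
      have hfacpos : (0 : ℝ) < (i ! : ℝ) := by positivity
      gcongr ?_ / _
      calc |iteratedDeriv (i + j) f a| * |b - a| ^ i
            ≤ (M (i + j) * Real.exp (((i + j : ℕ) : ℝ) - k)) * |b - a| ^ i :=
              mul_le_mul_of_nonneg_right hija (by positivity)
          _ ≤ M j * Real.exp ((j : ℝ) - k) * (Real.exp 1 * μ k * |b - a|) ^ i := hki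
    have hrem : M k * |b - a| ^ (n + 1) / (n + 1)! ≤
        M j * Real.exp ((j : ℝ) - k) * (Real.exp 1 * μ k * |b - a|) ^ (n + 1) / (n + 1)! := by
      have hki := key (n + 1) (by omega)
      have : M k * |b - a| ^ (n + 1) ≤
          M j * Real.exp ((j : ℝ) - k) * (Real.exp 1 * μ k * |b - a|) ^ (n + 1) := by
        have hki2 := key (n + 1) (by omega)
        rw [hnk] at hki2
        simpa using hki2
      gcongr
    set S : ℝ := ∑ i ∈ Finset.range (n + 1),
      iteratedDeriv i (iteratedDeriv j f) a * (b - a) ^ i / i ! with hSdef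
    have hA : 0 ≤ M j * Real.exp ((j : ℝ) - k) := by positivity
    have h7 : ∑ i ∈ Finset.range (n + 2),
        M j * Real.exp ((j : ℝ) - k) * (Real.exp 1 * μ k * |b - a|) ^ i / i !
        = M j * Real.exp ((j : ℝ) - k) *
          ∑ i ∈ Finset.range (n + 2), (Real.exp 1 * μ k * |b - a|) ^ i / i ! := by
      rw [Finset.mul_sum]
      exact Finset.sum_congr rfl fun i _ => by ring
    have h8 := Real.sum_le_exp_of_nonneg ht0 (n + 2)
    calc |iteratedDeriv j f b|
        = |(iteratedDeriv j f b - S) + S| := by congr 1; ring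
      _ ≤ |iteratedDeriv j f b - S| + |S| := abs_add_le _ _
      _ ≤ M k * |b - a| ^ (n + 1) / (n + 1)! +
          ∑ i ∈ Finset.range (n + 1),
            M j * Real.exp ((j : ℝ) - k) * (Real.exp 1 * μ k * |b - a|) ^ i / i ! :=
        add_le_add H hS
      _ ≤ M j * Real.exp ((j : ℝ) - k) * (Real.exp 1 * μ k * |b - a|) ^ (n + 1) / (n + 1)! +
          ∑ i ∈ Finset.range (n + 1),
            M j * Real.exp ((j : ℝ) - k) * (Real.exp 1 * μ k * |b - a|) ^ i / i ! :=
        add_le_add hrem le_rfl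
      _ = ∑ i ∈ Finset.range (n + 2),
            M j * Real.exp ((j : ℝ) - k) * (Real.exp 1 * μ k * |b - a|) ^ i / i ! := by
        conv_rhs => rw [Finset.sum_range_succ]
        rw [add_comm]
      _ = M j * Real.exp ((j : ℝ) - k) *
            ∑ i ∈ Finset.range (n + 2), (Real.exp 1 * μ k * |b - a|) ^ i / i ! := h7
      _ ≤ M j * Real.exp ((j : ℝ) - k) * Real.exp (Real.exp 1 * μ k * |b - a|) :=
        mul_le_mul_of_nonneg_left h8 hA

/-- lower bound for the distance from a point to an `m`-fold zero. -/
theorem stmt2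
    (μ M : ℕ → ℝ)
    (hμpos : ∀ j, 1 ≤ j → 0 < μ j)
    (hμmono : ∀ j, 1 ≤ j → μ j ≤ μ (j + 1))
    (hM0 : 0 < M 0)
    (hMrec : ∀ j, M (j + 1) = M j * μ (j + 1))
    (x y : ℝ) (hxy : x < y)
    (N : ℕ) (hN : 1 ≤ N)
    (f : ℝ → ℝ)
    (hf : ∃ U : Set ℝ, IsOpen U ∧ Set.Icc x y ⊆ U ∧ ContDiffOn ℝ (N : ℕ∞) f U)
    (hbd : ∀ j ≤ N, ∀ t ∈ Set.Icc x y, |iteratedDeriv j f t| ≤ M j)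
    (w : ℝ) (hw : w ∈ Set.Icc x y) (hfw : f w ≠ 0)
    (m : ℕ) (hm1 : 1 ≤ m) (hmN : m ≤ N)
    (z0 : ℝ) (hz0 : z0 ∈ Set.Icc x y)
    (hzero : ∀ i < m, iteratedDeriv i f z0 = 0)
    (j0 : ℕ) (hj0 : j0 = sInf {j : ℕ | Real.log (M 0 / |f w|) ≤ (j : ℝ)}) :
    (1 / Real.exp 1) * ∑ j ∈ Finset.Ioc j0 m, 1 / μ j ≤ |w - z0| := by
  obtain ⟨U, hU, hUsub, hfC⟩ := hf
  by_contra hcon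
  push_neg at hcon
  have hfz0 : f z0 = 0 := by
    have := hzero 0 (by omega)
    simpa [iteratedDeriv_zero] using this
  have hwz : w ≠ z0 := fun h => hfw (by rw [h]; exact hfz0)
  set d := |w - z0| with hddef
  have hd0 : 0 < d := abs_pos.mpr (sub_ne_zero.mpr hwz)
  have hfw0 : 0 < |f w| := abs_pos.mpr hfw
  have hj0mem : Real.log (M 0 / |f w|) ≤ (j0 : ℝ) := by
    have hne : {j : ℕ | Real.log (M 0 / |f w|) ≤ (j : ℝ)}.Nonempty :=
      ⟨⌈Real.log (M 0 / |f w|)⌉₊, by simp only [Set.mem_setOf_eq]; exact Nat.le_ceil _⟩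
    have hmem := Nat.sInf_mem hne
    rw [← hj0] at hmem
    exact hmem
  have hlow : M 0 * Real.exp (-(j0 : ℝ)) ≤ |f w| := by
    have hpos : 0 < M 0 / |f w| := div_pos hM0 hfw0
    have h1 : M 0 / |f w| ≤ Real.exp (j0 : ℝ) := by
      rw [← Real.exp_log hpos]
      exact Real.exp_le_exp.mpr hj0mem
    rw [div_le_iff₀ hfw0] at h1
    have he := Real.exp_pos (j0 : ℝ)
    have h2 := mul_le_mul_of_nonneg_right h1 (inv_pos.mpr he).le
    rw [mul_comm (Real.exp (j0 : ℝ)) (|f w|), mul_assoc, mul_inv_cancel₀ he.ne', mul_one] at h2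
    rwa [Real.exp_neg]
  set S : ℕ → ℝ := fun k => (1 / Real.exp 1) * ∑ j ∈ Finset.Ioc k m, 1 / μ j with hSdef
  have hconS : d < S j0 := hcon
  have hj0m : j0 < m := by
    by_contra hh
    push_neg at hh
    have hempty : Finset.Ioc j0 m = ∅ := Finset.Ioc_eq_empty (by omega)
    have hS0' : S j0 = 0 := by
      simp only [hSdef, hempty, Finset.sum_empty, mul_zero]
    rw [hS0'] at hconS
    exact absurd hconS (not_lt.mpr hd0.le)
  have hS0 : ∀ k, 0 ≤ S k := by
    intro k
    simp only [hSdef]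
    apply mul_nonneg (by positivity)
    apply Finset.sum_nonneg
    intro i hi
    rw [Finset.mem_Ioc] at hi
    have := hμpos i (by omega)
    positivity
  have hSm : S m = 0 := by simp [hSdef]
  have hSstep : ∀ k : ℕ, 1 ≤ k → k ≤ m →
      S (k - 1) = S k + (1 / Real.exp 1) * (1 / μ k) := by
    intro k h1 h2
    have hIoc : Finset.Ioc (k - 1) m = Finset.Icc k m := by
      ext t
      simp only [Finset.mem_Ioc, Finset.mem_Icc]
      omega
    simp only [hSdef]
    rw [hIoc, Finset.Icc_eq_cons_Ioc h2, Finset.sum_cons]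
    ring
  set q : ℕ → ℝ := fun k => z0 + (min (S k) d / d) * (w - z0) with hqdef
  have hqmem : ∀ k, q k ∈ Set.Icc x y := by
    intro k
    simp only [hqdef]
    have ht1 : 0 ≤ min (S k) d / d := div_nonneg (le_min (hS0 k) hd0.le) hd0.le
    have ht2 : min (S k) d / d ≤ 1 := div_le_one_of_le₀ (min_le_right _ _) hd0.le
    constructor
    · nlinarith [hz0.1, hw.1]
    · nlinarith [hz0.2, hw.2]
  have hqm : q m = z0 := by
    simp only [hqdef, hSm]
    rw [min_eq_left hd0.le]
    simp
  have hPm : (S m ≤ d ∧ ∀ j ≤ m, |iteratedDeriv j f (q m)| ≤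
      M j * Real.exp ((j : ℝ) - (m : ℝ))) ∨ |f w| < M 0 * Real.exp (-(j0 : ℝ)) := by
    left
    refine ⟨by rw [hSm]; exact hd0.le, ?_⟩
    intro j hj
    rw [hqm]
    rcases eq_or_lt_of_le hj with rfl | hjm
    · simp only [sub_self, Real.exp_zero, mul_one]
      exact hbd j hmN z0 hz0
    · rw [hzero j hjm]
      simp only [abs_zero]
      exact mul_nonneg (M_pos hμpos hM0 hMrec j).le (Real.exp_pos _).le
  have key : ∀ i : ℕ, i ≤ m - j0 →
      ((S (m - i) ≤ d ∧ ∀ j ≤ m - i, |iteratedDeriv j f (q (m - i))| ≤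
        M j * Real.exp ((j : ℝ) - ((m - i : ℕ) : ℝ))) ∨
       |f w| < M 0 * Real.exp (-(j0 : ℝ))) := by
    intro i
    induction i with
    | zero =>
      intro _
      simp only [Nat.sub_zero]
      exact hPm
    | succ i ih =>
      intro hi
      have hP := ih (by omega)
      set k := m - i with hk
      have hk1 : 1 ≤ k := by omega
      have hkm : k ≤ m := by omega
      have hj0k : j0 < k := by omega
      have hμk : 0 < μ k := hμpos k hk1
      have hgoalidx : m - (i + 1) = k - 1 := by omega
      rw [hgoalidx]
      rcases hP with ⟨hSk, hder⟩ | hdone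
      · have hstep := hSstep k hk1 hkm
        have hpos' : (0 : ℝ) < (1 / Real.exp 1) * (1 / μ k) := by positivity
        have hcast : ((k - 1 : ℕ) : ℝ) = (k : ℝ) - 1 := by
          rw [Nat.cast_sub hk1, Nat.cast_one]
        rcases le_or_gt (S (k - 1)) d with hle | hgt
        · -- full step
          left
          have hq1 : min (S (k - 1)) d = S (k - 1) := min_eq_left hle
          have hq2 : min (S k) d = S k := min_eq_left hSk
          have hdiffq : q (k - 1) - q k = ((S (k - 1) - S k) / d) * (w - z0) := by
            simp only [hqdef, hq1, hq2]
            ring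
          have habs : |q (k - 1) - q k| = S (k - 1) - S k := by
            rw [hdiffq, abs_mul, abs_div, abs_of_nonneg (by linarith : (0:ℝ) ≤ S (k-1) - S k),
              abs_of_pos hd0, ← hddef, div_mul_cancel₀ _ hd0.ne']
          have hexp1 : Real.exp 1 * μ k * |q (k - 1) - q k| = 1 := by
            rw [habs, show S (k - 1) - S k = (1 / Real.exp 1) * (1 / μ k) by linarith]
            field_simp
          have H := step_lemma μ M hμpos hμmono hM0 hMrec x y hxy.le N f U hU hUsub hfC hbd
            k hk1 (hkm.trans hmN) (q k) (q (k - 1)) (hqmem k) (hqmem (k - 1)) hder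
          refine ⟨hle, ?_⟩
          intro j hjle
          have Hj := H j (by omega)
          rw [hexp1] at Hj
          have harg : (j : ℝ) - (k : ℝ) + 1 = (j : ℝ) - ((k - 1 : ℕ) : ℝ) := by
            rw [hcast]; ring
          calc |iteratedDeriv j f (q (k - 1))|
              ≤ M j * Real.exp ((j : ℝ) - (k : ℝ)) * Real.exp 1 := Hj
            _ = M j * Real.exp ((j : ℝ) - ((k - 1 : ℕ) : ℝ)) := by
                rw [mul_assoc, ← Real.exp_add, harg]
        · -- partial step reaching w
          right
          have hq2 : min (S k) d = S k := min_eq_left hSk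
          have hq1 : min (S (k - 1)) d = d := min_eq_right hgt.le
          have hqk1 : q (k - 1) = w := by
            simp only [hqdef, hq1]
            rw [div_self hd0.ne']
            ring
          have hdiffq : q (k - 1) - q k = ((d - S k) / d) * (w - z0) := by
            simp only [hqdef, hq1, hq2]
            ring
          have habs : |q (k - 1) - q k| = d - S k := by
            rw [hdiffq, abs_mul, abs_div, abs_of_nonneg (by linarith : (0:ℝ) ≤ d - S k),
              abs_of_pos hd0, ← hddef, div_mul_cancel₀ _ hd0.ne']
          have hlt1 : Real.exp 1 * μ k * |q (k - 1) - q k| < 1 := by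
            rw [habs]
            have hdlt : d - S k < (1 / Real.exp 1) * (1 / μ k) := by linarith
            calc Real.exp 1 * μ k * (d - S k)
                < Real.exp 1 * μ k * ((1 / Real.exp 1) * (1 / μ k)) :=
                  mul_lt_mul_of_pos_left hdlt (by positivity)
              _ = 1 := by field_simp
          have H := step_lemma μ M hμpos hμmono hM0 hMrec x y hxy.le N f U hU hUsub hfC hbd
            k hk1 (hkm.trans hmN) (q k) (q (k - 1)) (hqmem k) (hqmem (k - 1)) hder 0
            (Nat.zero_le k)
          rw [hqk1] at H hlt1
          simp only [iteratedDeriv_zero, Nat.cast_zero, zero_sub] at H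
          have hnext : M 0 * Real.exp (-(k : ℝ)) * Real.exp (Real.exp 1 * μ k * |w - q k|)
              < M 0 * Real.exp (-(k : ℝ)) * Real.exp 1 :=
            mul_lt_mul_of_pos_left (Real.exp_lt_exp.mpr hlt1)
              (mul_pos hM0 (Real.exp_pos _))
          have harg2 : -(k : ℝ) + 1 ≤ -(j0 : ℝ) := by
            have h9 : (j0 : ℝ) + 1 ≤ (k : ℝ) := by exact_mod_cast hj0k
            linarith
          calc |f w| ≤ M 0 * Real.exp (-(k : ℝ)) *
                Real.exp (Real.exp 1 * μ k * |w - q k|) := H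
            _ < M 0 * Real.exp (-(k : ℝ)) * Real.exp 1 := hnext
            _ = M 0 * Real.exp (-(k : ℝ) + 1) := by rw [mul_assoc, ← Real.exp_add]
            _ ≤ M 0 * Real.exp (-(j0 : ℝ)) :=
              mul_le_mul_of_nonneg_left (Real.exp_le_exp.mpr harg2) hM0.le
      · right
        exact hdone
  have hPj0 := key (m - j0) le_rfl
  rw [Nat.sub_sub_self (le_of_lt hj0m)] at hPj0
  rcases hPj0 with ⟨hle, _⟩ | hlt
  · exact absurd hconS (not_lt.mpr hle)
  · linarith
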